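/- Let 0 < s₁ ≤ s₂, with I₁, I₂ as the Poisson mutual information functions with gains α, 1 and dark currents s₁, s₂, and let f₁(q) = (I₁(q) − I₂(q))/(1−q) on [0,1). Then f₁'(q) = (1−q)^{-2}·(α − g₁(q))·((1+s₁)·log((1+s₁)/(q+s₁)) − 1 + q), where g₁(x) = ((1+s₂)log((1+s₂)/(x+s₂)) − 1 + x)/((1+s₁)log((1+s₁)/(x+s₁)) − 1 + x). -/

import Mathlib

open Real Set

lemma hasDerivAt_I (s : ℝ) (q : ℝ) (hq : 0 < q + s) :
    HasDerivAt (fun q : ℝ => -(q + s) * Real.log (q + s) + q * (1 + s) * Real.log (1 + s)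
        + (1 - q) * s * Real.log s)
      (-Real.log (q + s) - 1 + (1 + s) * Real.log (1 + s) - s * Real.log s) q := by
  have h1 : HasDerivAt (fun q : ℝ => q + s) 1 q := (hasDerivAt_id q).add_const s
  have hlog : HasDerivAt (fun q : ℝ => Real.log (q + s)) (1 / (q + s)) q := by
    simpa using h1.log hq.ne'
  have hA : HasDerivAt (fun x : ℝ => -((x + s) * Real.log (x + s)))
      (-(Real.log (q + s) + 1)) q := by
    have := (h1.mul hlog).neg
    refine this.congr_deriv ?_
    rw [mul_one_div_cancel hq.ne']; ring
  have hB : HasDerivAt (fun x : ℝ => x * ((1 + s) * Real.log (1 + s)))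
      ((1 + s) * Real.log (1 + s)) q := by
    simpa using (hasDerivAt_id q).mul_const ((1 + s) * Real.log (1 + s))
  have hC : HasDerivAt (fun x : ℝ => (1 - x) * (s * Real.log s)) (-(s * Real.log s)) q := by
    have h : HasDerivAt (fun x : ℝ => 1 - x) (-1) q := by
      simpa using (hasDerivAt_id q).const_sub 1
    simpa using h.mul_const (s * Real.log s)
  have := (hA.add hB).add hC
  simp only [neg_mul, mul_assoc]
  refine this.congr_deriv ?_
  ring

lemma D_pos (s : ℝ) (hs : 0 < s) (q : ℝ) (hq0 : 0 ≤ q) (hq1 : q < 1) :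
    0 < (1 + s) * (Real.log (1 + s) - Real.log (q + s)) - (1 - q) := by
  have h1s : (0:ℝ) < 1 + s := by linarith
  have hqs : (0:ℝ) < q + s := by linarith
  have hlt : Real.log ((q + s) / (1 + s)) < (q + s) / (1 + s) - 1 := by
    apply Real.log_lt_sub_one_of_pos (by positivity)
    intro h
    have : q + s = 1 + s := by
      field_simp at h
      linarith
    linarith
  rw [Real.log_div hqs.ne' h1s.ne'] at hlt
  have h2 : (1 + s) * (Real.log (q + s) - Real.log (1 + s))
      < (1 + s) * ((q + s) / (1 + s) - 1) := by
    exact (mul_lt_mul_iff_right₀ h1s).mpr hlt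
  have h3 : (1 + s) * ((q + s) / (1 + s) - 1) = q - 1 := by
    field_simp
    ring
  nlinarith

theorem f1_deriv (s₁ s₂ α : ℝ) (h1 : 0 < s₁) (h12 : s₁ ≤ s₂) :
    ∀ q ∈ Ico (0:ℝ) 1,
      deriv (fun q : ℝ =>
        (α * (-(q + s₁) * Real.log (q + s₁) + q * (1 + s₁) * Real.log (1 + s₁)
            + (1 - q) * s₁ * Real.log s₁)
          - (-(q + s₂) * Real.log (q + s₂) + q * (1 + s₂) * Real.log (1 + s₂)
            + (1 - q) * s₂ * Real.log s₂)) / (1 - q)) q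
      = ((α - ((1 + s₂) * Real.log ((1 + s₂) / (q + s₂)) - 1 + q) /
            ((1 + s₁) * Real.log ((1 + s₁) / (q + s₁)) - 1 + q))
          * ((1 + s₁) * Real.log ((1 + s₁) / (q + s₁)) - 1 + q)) / (1 - q) ^ 2 := by
  rintro q ⟨hq0, hq1⟩
  have hs2 : 0 < s₂ := lt_of_lt_of_le h1 h12
  have hqs1 : 0 < q + s₁ := by linarith
  have hqs2 : 0 < q + s₂ := by linarith
  have h1s1 : (0:ℝ) < 1 + s₁ := by linarith
  have h1s2 : (0:ℝ) < 1 + s₂ := by linarith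
  have h1q : 0 < 1 - q := by linarith
  have hN : HasDerivAt (fun q : ℝ =>
      α * (-(q + s₁) * Real.log (q + s₁) + q * (1 + s₁) * Real.log (1 + s₁)
        + (1 - q) * s₁ * Real.log s₁)
      - (-(q + s₂) * Real.log (q + s₂) + q * (1 + s₂) * Real.log (1 + s₂)
        + (1 - q) * s₂ * Real.log s₂))
      (α * (-Real.log (q + s₁) - 1 + (1 + s₁) * Real.log (1 + s₁) - s₁ * Real.log s₁)
        - (-Real.log (q + s₂) - 1 + (1 + s₂) * Real.log (1 + s₂) - s₂ * Real.log s₂)) q :=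
    ((hasDerivAt_I s₁ q hqs1).const_mul α).sub (hasDerivAt_I s₂ q hqs2)
  have hden : HasDerivAt (fun x : ℝ => 1 - x) (-1) q := by
    simpa using (hasDerivAt_id q).const_sub 1
  have hder := (hN.div hden h1q.ne').deriv
  refine hder.trans ?_
  have hD1 : (1 + s₁) * Real.log ((1 + s₁) / (q + s₁)) - 1 + q
      = (1 + s₁) * (Real.log (1 + s₁) - Real.log (q + s₁)) - (1 - q) := by
    rw [Real.log_div h1s1.ne' hqs1.ne']; ring
  have hD2 : (1 + s₂) * Real.log ((1 + s₂) / (q + s₂)) - 1 + q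
      = (1 + s₂) * (Real.log (1 + s₂) - Real.log (q + s₂)) - (1 - q) := by
    rw [Real.log_div h1s2.ne' hqs2.ne']; ring
  rw [hD1, hD2]
  have hD1pos := D_pos s₁ h1 q hq0 hq1
  have hD1ne : (1 + s₁) * (Real.log (1 + s₁) - Real.log (q + s₁)) - (1 - q) ≠ 0 := hD1pos.ne'
  field_simp
  ring
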